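/- Let A = ⊕_{χ∈X*(G)} A_χ be an X*(G)-graded ring (coming from a torus action on Spec A) and V = ⊕_{χ} V_χ a compatibly graded A-module generated by homogeneous elements v₁,…,v_n with v_i ∈ V_{χ_i}. Fix a point x with evaluation maps [x]_χ : V_χ → k and [f(x)]_χ : A_χ → k, and let Γ_{f(x)} = {χ : [f(x)]_χ ≠ 0}, Γ_x = {χ : [x]_χ ≠ 0}. Assume [x]_{χ_i}(v_i) ≠ 0 exactly for 1 ≤ i ≤ k. Then Γ_x = ∪_{i=1}^{k} (χ_i + Γ_{f(x)}). -/
import Mathlib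


/- STATEMENT 15 (Lemma 3.8): `A` is an `X^*(G)`-graded ring (components `A χ`,
evaluation `evA χ = [f(x)]_χ`) and `V` a compatibly graded `A`-module
(components `V χ`, evaluation `evV χ = [x]_χ`, transport `tr` along equalities
of weights), with the multiplicativity `[x]_{χ+χ'}(a·v) = [f(x)]_χ(a)·[x]_{χ'}(v)`.
`V` is generated by homogeneous elements `vgen i ∈ V (χw i)` and
`[x]_{χw i}(vgen i) ≠ 0` exactly for `i < K`.  Then
`Γ_x = ⋃_{i<K} (χw i + Γ_{f(x)})`. -/
theorem stmt15 {Λ k : Type*} [AddCommGroup Λ] [Field k]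
    (A V : Λ → Type*) [∀ χ, AddCommMonoid (V χ)]
    (smul : ∀ {χ χ' : Λ}, A χ → V χ' → V (χ + χ'))
    (tr : ∀ {χ χ' : Λ}, χ = χ' → V χ → V χ')
    (evA : ∀ χ, A χ → k) (evV : ∀ χ, V χ → k)
    (htr : ∀ {χ χ' : Λ} (h : χ = χ') (v : V χ), evV χ' (tr h v) = evV χ v)
    (hevV_add : ∀ (χ : Λ) (u u' : V χ), evV χ (u + u') = evV χ u + evV χ u')
    (hevV_zero : ∀ χ : Λ, evV χ (0 : V χ) = 0)
    (hmul : ∀ {χ χ' : Λ} (a : A χ) (v : V χ'),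
      evV (χ + χ') (smul a v) = evA χ a * evV χ' v)
    (N : ℕ) (χw : Fin N → Λ) (vgen : ∀ i, V (χw i))
    (hgen : ∀ (χ : Λ) (v : V χ), ∃ a : ∀ i, A (χ - χw i),
      v = ∑ i, tr (sub_add_cancel χ (χw i)) (smul (a i) (vgen i)))
    (K : ℕ) (hsupp : ∀ i : Fin N, evV (χw i) (vgen i) ≠ 0 ↔ (i : ℕ) < K) :
    {χ : Λ | ∃ v : V χ, evV χ v ≠ 0} =
      ⋃ i ∈ {i : Fin N | (i : ℕ) < K},
        {χ : Λ | ∃ χ' : Λ, (∃ a : A χ', evA χ' a ≠ 0) ∧ χ = χw i + χ'} := by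
  ext χ
  simp only [Set.mem_setOf_eq, Set.mem_iUnion]
  constructor
  · rintro ⟨v, hv⟩
    obtain ⟨a, rfl⟩ := hgen χ v
    let F : V χ →+ k := ⟨⟨evV χ, hevV_zero χ⟩, hevV_add χ⟩
    rw [show evV χ = F from rfl, map_sum] at hv
    obtain ⟨i, hi⟩ := Finset.exists_ne_zero_of_sum_ne_zero hv
    have : evV χ (tr (sub_add_cancel χ (χw i)) (smul (a i) (vgen i))) ≠ 0 := hi.2
    rw [htr, hmul] at this
    exact ⟨i, (hsupp i).mp (right_ne_zero_of_mul this),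
      χ - χw i, ⟨a i, left_ne_zero_of_mul this⟩, by abel⟩
  · rintro ⟨i, hi, χ', ⟨a, ha⟩, rfl⟩
    refine ⟨tr (by abel : χ' + χw i = χw i + χ') (smul a (vgen i)), ?_⟩
    rw [htr, hmul]
    exact mul_ne_zero ha ((hsupp i).mpr hi)
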